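/- Let L ⊆ Σ* be a regular language. Then the function n ↦ |Σ^{≤n}/≈_L| is bounded by a polynomial in n if and only if the Myhill–Nerode right congruence ~_L has no critical tuple. -/

import Mathlib

/-! Common definitions for sliding-window / visibly pushdown formalizations. -/

/-- `γ` grows polynomially: `γ(n) ∈ O(n^k)` for some `k`. -/
def GrowsPolynomially (γ : ℕ → ℕ) : Prop :=
  ∃ k C : ℕ, ∀ n : ℕ, γ n ≤ C * (n + 1) ^ k

/-- `γ` grows exponentially: there is `c > 1` with `γ(n) ≥ c^n` for infinitely many `n`. -/
def GrowsExponentially (γ : ℕ → ℕ) : Prop :=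
  ∃ c : ℝ, 1 < c ∧ ∀ m : ℕ, ∃ n : ℕ, m ≤ n ∧ c ^ n ≤ (γ n : ℝ)

/-- A set of words is suffix-closed. -/
def SuffixClosed {α : Type} (X : Set (List α)) : Prop :=
  ∀ x ∈ X, ∀ s : List α, s <:+ x → s ∈ X

/-- Domain of a partial function presented with `Option`. -/
def pdom {α β : Type} (t : List α → Option β) : Set (List α) := {x | t x ≠ none}

/-- The `t`-growth of `X`: the number of values of `t` on words of `X` of length at most `n`. -/
noncomputable def growthOf {α : Type} {Y : Type} (t : List α → Y) (X : Set (List α)) (n : ℕ) : ℕ :=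
  (t '' {x | x ∈ X ∧ x.length ≤ n}).ncard

/-- Growth of a language: number of its words of length at most `n`. -/
noncomputable def langGrowth {β : Type} (L : Set (List β)) (n : ℕ) : ℕ :=
  {y | y ∈ L ∧ y.length ≤ n}.ncard

/-- Suffix expansion of a (total or partial) function: the tuple of values on all
nonempty suffixes `a₁⋯aₙ, a₂⋯aₙ, …, aₙ` of the input. -/
def cev {α : Type} {Y : Type} (t : List α → Y) (x : List α) : List Y :=
  x.tails.dropLast.map t

/-- Image of `X` under the partial function `t`. -/
def optImage {α β : Type} (t : List α → Option β) (X : Set (List α)) : Set β :=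
  {y | ∃ x ∈ X, t x = some y}

/-- A language is bounded if it is contained in `w₁* w₂* ⋯ w_k*`. -/
def BoundedLang {β : Type} (L : Set (List β)) : Prop :=
  ∃ ws : List (List β), ∀ x ∈ L, ∃ ms : List ℕ, ms.length = ws.length ∧
    x = (List.zipWith (fun (w : List β) (m : ℕ) => (List.replicate m w).flatten) ws ms).flatten

/-- `{u,v}*`: all concatenations of copies of `u` and `v`. -/
def UVStar {α : Type} (u v : List α) : Set (List α) :=
  {w | ∃ l : List (List α), (∀ p ∈ l, p = u ∨ p = v) ∧ w = l.flatten}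

/-- `{u,v}^{≤ n}`: concatenations of at most `n` words, each equal to `u` or `v`. -/
def UVPow {α : Type} (u v : List α) (n : ℕ) : Set (List α) :=
  {w | ∃ l : List (List α), (∀ p ∈ l, p = u ∨ p = v) ∧ l.length ≤ n ∧ w = l.flatten}

/-- The set `{u₂,v₂}{u,v}* Z`. -/
def FoolingSet {α : Type} (u₂ v₂ u v : List α) (Z : Set (List α)) : Set (List α) :=
  {x | ∃ a w z, (a = u₂ ∨ a = v₂) ∧ w ∈ UVStar u v ∧ z ∈ Z ∧ x = a ++ (w ++ z)}

/-- Linear fooling scheme for a partial function `t`. -/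
def IsLinearFoolingScheme {α Y : Type} (t : List α → Option Y)
    (u₂ v₂ u v : List α) (Z : Set (List α)) : Prop :=
  u₂ <:+ u ∧ v₂ <:+ v ∧ u₂.length = v₂.length ∧
  FoolingSet u₂ v₂ u v Z ⊆ pdom t ∧
  ∃ C : ℕ, ∀ n : ℕ, ∃ z ∈ Z, z.length ≤ C * (n + 1) ∧
    ∀ w ∈ UVPow u v n, t (u₂ ++ (w ++ z)) ≠ t (v₂ ++ (w ++ z))

/-- `X` contains a linear fooling set for `t`. -/
def ContainsLinearFoolingSet {α Y : Type} (t : List α → Option Y) (X : Set (List α)) : Prop :=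
  ∃ u₂ v₂ u v Z, IsLinearFoolingScheme t u₂ v₂ u v Z ∧ FoolingSet u₂ v₂ u v Z ⊆ X

/-! ### Transducers and rational functions -/

/-- A finite-state transducer over `(α, β)` with terminal output function. -/
structure Transducer (α β : Type) where
  Q : Type
  finQ : Fintype Q
  I : Set Q
  F : Set Q
  Δ : Set (Q × List α × List β × Q)
  finΔ : Δ.Finite
  o : Q → List β

namespace Transducer

variable {α β : Type}

/-- A run from `p` to `r` with input `x` and output `y`. -/
inductive Run (A : Transducer α β) : A.Q → List α → List β → A.Q → Prop
  | nil (q : A.Q) : Run A q [] [] q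
  | cons {p q r : A.Q} {x₁ x : List α} {y₁ y : List β} :
      (p, x₁, y₁, q) ∈ A.Δ → Run A q x y r → Run A p (x₁ ++ x) (y₁ ++ y) r

/-- The transduction defined by a transducer. -/
def T (A : Transducer α β) : Set (List α × List β) :=
  {p | ∃ q₀ q y, q₀ ∈ A.I ∧ q ∈ A.F ∧ A.Run q₀ p.1 y q ∧ p.2 = y ++ A.o q}

end Transducer

/-- A partial function is rational if its graph is the transduction of some transducer. -/
def IsRationalFun {α β : Type} (t : List α → Option (List β)) : Prop :=
  ∃ A : Transducer α β, ∀ x y, t x = some y ↔ (x, y) ∈ A.T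

/-! ### Right congruences, suffix expansions, critical tuples -/

/-- A right congruence: an equivalence relation compatible with appending on the right. -/
def IsRightCongruence {α : Type} (r : List α → List α → Prop) : Prop :=
  Equivalence r ∧ ∀ x y z : List α, r x y → r (x ++ z) (y ++ z)

/-- Suffix expansion of a relation: words of the same length whose corresponding
nonempty suffixes are all related. -/
def SuffixExpansion {α : Type} (r : List α → List α → Prop) (x y : List α) : Prop :=
  x.length = y.length ∧ ∀ i < x.length, r (x.drop i) (y.drop i)

/-- Number of `r`-classes of words of length at most `n`. -/
noncomputable def classCount {α : Type} (r : List α → List α → Prop) (n : ℕ) : ℕ :=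
  Set.ncard {C : Set (List α) | ∃ x : List α, x.length ≤ n ∧ C = {y | r x y}}

/-- A relation has finite index if it has finitely many classes. -/
def FiniteIndex {α : Type} (r : List α → List α → Prop) : Prop :=
  Set.Finite {C : Set (List α) | ∃ x : List α, C = {y | r x y}}

/-- Critical tuple in a right congruence. -/
def IsCriticalTuple {α : Type} (r : List α → List α → Prop) (u₂ v₂ u v : List α) : Prop :=
  1 ≤ u₂.length ∧ u₂.length = v₂.length ∧ u₂ <:+ u ∧ v₂ <:+ v ∧
  ∀ w ∈ UVStar u v, ¬ r (u₂ ++ w) (v₂ ++ w)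

/-- The Myhill–Nerode right congruence of a language. -/
def MNrel {α : Type} (L : Set (List α)) (x y : List α) : Prop :=
  ∀ z : List α, x ++ z ∈ L ↔ y ++ z ∈ L

/-! ### Suffix distance and the canonical right congruence of a rational function -/

/-- Longest common prefix. -/
def cpre {β : Type} [DecidableEq β] : List β → List β → List β
  | a :: x, b :: y => if a = b then a :: cpre x y else []
  | _, _ => []

/-- `‖x,y‖ = |x| + |y| − 2|x ∧ y|`, where `x ∧ y` is the longest common suffix. -/
def suffDist {β : Type} [DecidableEq β] (x y : List β) : ℕ :=
  x.length + y.length - 2 * (cpre x.reverse y.reverse).length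

/-- Value of a partial function (defaulting to the empty word off the domain). -/
def pval {α β : Type} (t : List α → Option (List β)) (x : List α) : List β :=
  (t x).getD []

/-- The right congruence `R_t` of Reutenauer–Schützenberger. -/
def Rt {α β : Type} [DecidableEq β] (t : List α → Option (List β)) (u v : List α) : Prop :=
  (∀ z : List α, u ++ z ∈ pdom t ↔ v ++ z ∈ pdom t) ∧
  Set.Finite {d : ℕ | ∃ w : List α, u ++ w ∈ pdom t ∧ v ++ w ∈ pdom t ∧
      d = suffDist (pval t (u ++ w)) (pval t (v ++ w))}

/-- Two partial functions are adjacent. -/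
def Adjacent {α β : Type} [DecidableEq β] (t₁ t₂ : List α → Option (List β)) : Prop :=
  Set.Finite {d : ℕ | ∃ w : List α, w ∈ pdom t₁ ∧ w ∈ pdom t₂ ∧
      d = suffDist (pval t₁ w) (pval t₂ w)}

/-! ### Visibly pushdown automata -/

/-- Kinds of letters of a pushdown alphabet. -/
inductive VPKind : Type
  | call : VPKind
  | ret : VPKind
  | intern : VPKind
deriving DecidableEq

/-- A visibly pushdown automaton over the pushdown alphabet determined by `pa`.
The bottom-of-stack symbol `⊥` is represented implicitly by the empty stack. -/
structure VPA (α : Type) (pa : α → VPKind) where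
  Q : Type
  finQ : Fintype Q
  Γ : Type
  finΓ : Fintype Γ
  q₀ : Q
  F : Set Q
  δc : Q → α → Γ × Q
  δr : Q → α → Option Γ → Q
  δi : Q → α → Q

namespace VPA

variable {α : Type} {pa : α → VPKind}

/-- One step of the VPA on a configuration (stack with top at the head, state). -/
def step (A : VPA α pa) (c : List A.Γ × A.Q) (a : α) : List A.Γ × A.Q :=
  match pa a with
  | VPKind.call => ((A.δc c.2 a).1 :: c.1, (A.δc c.2 a).2)
  | VPKind.intern => (c.1, A.δi c.2 a)
  | VPKind.ret =>
    match c.1 with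
    | [] => ([], A.δr c.2 a none)
    | γ :: st => (st, A.δr c.2 a (some γ))

/-- Extended transition function on words. -/
def run (A : VPA α pa) (c : List A.Γ × A.Q) (w : List α) : List A.Γ × A.Q :=
  w.foldl A.step c

/-- The language accepted by a VPA (from the initial configuration `⊥q₀`). -/
def acceptsLang (A : VPA α pa) : Set (List α) :=
  {w | (A.run ([], A.q₀) w).2 ∈ A.F}

/-- Language accepted from a configuration. -/
def AccLang (A : VPA α pa) (c : List A.Γ × A.Q) : Set (List α) :=
  {w | (A.run c w).2 ∈ A.F}

/-- The reachable configurations. -/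
def rConf (A : VPA α pa) : Set (List A.Γ × A.Q) :=
  Set.range (fun w => A.run ([], A.q₀) w)

end VPA

/-- A language is a visibly pushdown language over the pushdown alphabet `pa`. -/
def IsVPL {α : Type} (pa : α → VPKind) (L : Set (List α)) : Prop :=
  ∃ A : VPA α pa, L = A.acceptsLang

/-- Well-matched words over a pushdown alphabet. -/
inductive WellMatched {α : Type} (pa : α → VPKind) : List α → Prop
  | nil : WellMatched pa []
  | intern (a : α) : pa a = VPKind.intern → WellMatched pa [a]
  | append {u v : List α} : WellMatched pa u → WellMatched pa v → WellMatched pa (u ++ v)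
  | wrap {w : List α} {a b : α} : WellMatched pa w → pa a = VPKind.call → pa b = VPKind.ret →
      WellMatched pa (a :: (w ++ [b]))

/-- Descending words: concatenations of well-matched words and return letters. -/
def Descending {α : Type} (pa : α → VPKind) (w : List α) : Prop :=
  ∃ l : List (List α),
    (∀ p ∈ l, WellMatched pa p ∨ ∃ b : α, pa b = VPKind.ret ∧ p = [b]) ∧ w = l.flatten

/-- Length-lexicographic order on configurations `⊥αq` (stacks compared bottom-first). -/
def ConfLe {Q Γ : Type} (ltQ : LinearOrder Q) (ltΓ : LinearOrder Γ)
    (c d : List Γ × Q) : Prop :=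
  c.1.length < d.1.length ∨
    (c.1.length = d.1.length ∧
      (List.Lex ltΓ.lt c.1.reverse d.1.reverse ∨ (c.1 = d.1 ∧ ltQ.le c.2 d.2)))

/-- `rep` chooses from each equivalence class of reachable configurations the
length-lexicographically least representative. -/
def IsRepFun {α : Type} {pa : α → VPKind} (A : VPA α pa)
    (ltQ : LinearOrder A.Q) (ltΓ : LinearOrder A.Γ)
    (rep : List A.Γ × A.Q → List A.Γ × A.Q) : Prop :=
  ∀ c ∈ A.rConf, rep c ∈ A.rConf ∧ A.AccLang (rep c) = A.AccLang c ∧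
    ∀ c' ∈ A.rConf, A.AccLang c' = A.AccLang c → ConfLe ltQ ltΓ (rep c) c'

/-- `ν_A(w)`: the representative of the configuration reached on `w`. -/
def nuA {α : Type} {pa : α → VPKind} (A : VPA α pa)
    (rep : List A.Γ × A.Q → List A.Γ × A.Q) (w : List α) : List A.Γ × A.Q :=
  rep (A.run ([], A.q₀) w)

/-- `σ₀(w)`: the states representing the Myhill–Nerode classes of the nonempty suffixes. -/
def sigma0 {α : Type} {pa : α → VPKind} (A : VPA α pa)
    (rep : List A.Γ × A.Q → List A.Γ × A.Q) (w : List α) : List A.Q :=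
  w.tails.dropLast.map fun s => (nuA A rep s).2

/-- `φ(w)`: the state transformation of a well-matched word. -/
def phiVPA {α : Type} {pa : α → VPKind} (A : VPA α pa) (w : List α) : A.Q → A.Q :=
  fun p => (A.run ([], p) w).2

/-- `σ₁(w) = φ(w) q₂ ⋯ qₙ`, a word over the alphabet `Q^Q ∪ Q`. -/
def sigma1 {α : Type} {pa : α → VPKind} (A : VPA α pa)
    (rep : List A.Γ × A.Q → List A.Γ × A.Q) (w : List α) : List ((A.Q → A.Q) ⊕ A.Q) :=
  Sum.inl (phiVPA A w) :: ((sigma0 A rep w).tail.map Sum.inr)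

/-! ### Real-time right transducers -/

/-- A real-time right transducer (reads its input from right to left). -/
structure RightTransducer (α β : Type) where
  Q : Type
  finQ : Fintype Q
  F : Set Q
  I : Set Q
  Δ : Set (Q × α × List β × Q)
  finΔ : Δ.Finite
  o : Q → List β

namespace RightTransducer

variable {α β : Type}

/-- Input word of a sequence of transitions. -/
def inputOf {Q : Type} (ts : List (Q × α × List β × Q)) : List α :=
  ts.map fun tr => tr.2.1

/-- Output word of a sequence of transitions. -/
def outputOf {Q : Type} (ts : List (Q × α × List β × Q)) : List β :=
  (ts.map fun tr => tr.2.2.1).flatten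

/-- `IsRunFrom A q ts p`: `ts` is a run on its input from the (rightmost) state `p`
to the (leftmost) state `q`; the transitions are listed left to right. -/
def IsRunFrom (A : RightTransducer α β) : A.Q → List (A.Q × α × List β × A.Q) → A.Q → Prop
  | q, [], p => q = p
  | q, tr :: ts, p => tr ∈ A.Δ ∧ tr.1 = q ∧ IsRunFrom A tr.2.2.2 ts p

/-- There is a run on `w` from `p` (right) to `q` (left). -/
def RunOn (A : RightTransducer α β) (q : A.Q) (w : List α) (p : A.Q) : Prop :=
  ∃ ts, A.IsRunFrom q ts p ∧ inputOf ts = w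

/-- `q ⪯ p`: there is a run from `p` to `q`. -/
def Below (A : RightTransducer α β) (q p : A.Q) : Prop :=
  ∃ w, A.RunOn q w p

/-- The partial function defined by a right transducer. -/
def Defines (A : RightTransducer α β) (t : List α → Option (List β)) : Prop :=
  ∀ x y, t x = some y ↔ ∃ p q ts, p ∈ A.F ∧ q ∈ A.I ∧ A.IsRunFrom p ts q ∧
    inputOf ts = x ∧ y = A.o p ++ outputOf ts

/-- Every state occurs on some initial accepting run. -/
def Trim (A : RightTransducer α β) : Prop :=
  ∀ s : A.Q, ∃ p q ts₁ ts₂, p ∈ A.F ∧ q ∈ A.I ∧ A.IsRunFrom p ts₁ s ∧ A.IsRunFrom s ts₂ q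

/-- Every input word has at most one initial accepting run. -/
def Unambiguous (A : RightTransducer α β) : Prop :=
  ∀ p p' q q' ts ts', p ∈ A.F → p' ∈ A.F → q ∈ A.I → q' ∈ A.I →
    A.IsRunFrom p ts q → A.IsRunFrom p' ts' q' → inputOf ts = inputOf ts' →
    p = p' ∧ ts = ts'

/-- `w` is guarded by `p`: some run on `w` from `p` stays in the SCC of `p`. -/
def Guarded (A : RightTransducer α β) (p : A.Q) (w : List α) : Prop :=
  ∃ q', A.RunOn q' w p ∧ A.Below p q'

/-- The transducer is well-behaved: the terminal outputs of guarded accepting runs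
from the same state on words of equal length coincide. -/
def WellBehaved (A : RightTransducer α β) : Prop :=
  ∀ (p q q' : A.Q) ts ts', q ∈ A.F → q' ∈ A.F →
    A.IsRunFrom q ts p → A.IsRunFrom q' ts' p →
    A.Guarded p (inputOf ts) → A.Guarded p (inputOf ts') →
    (inputOf ts).length = (inputOf ts').length →
    A.o q ++ outputOf ts = A.o q' ++ outputOf ts'

end RightTransducer

/-! ### The Parikh-like map Ψ -/

/-- `Ψ(w)`: each letter of `w` paired with its position counted from the right (1-based). -/
def Psi {α : Type} (w : List α) : Set (α × ℕ) :=
  {p | ∃ i : ℕ, w[i]? = some p.1 ∧ p.2 = w.length - i}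

/-- `Ψ(L) = ⋃_{w ∈ L} Ψ(w)`. -/
def PsiL {α : Type} (L : Set (List α)) : Set (α × ℕ) :=
  ⋃ w ∈ L, Psi w


set_option linter.unusedVariables false
set_option linter.unusedSectionVars false

namespace S6


lemma linear_lt_two_pow (a c : ℕ) : ∃ j, 0 < j ∧ a + j * c < 2 ^ j := by
  refine ⟨a + 2 * c + 2, by omega, ?_⟩
  have hA : a + 1 ≤ 2 ^ a := Nat.lt_two_pow_self (n := a)
  have hc : c + 1 ≤ 2 ^ c := Nat.lt_two_pow_self (n := c)
  have hB : (c + 1) ^ 2 ≤ 2 ^ (2 * c) := by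
    calc (c + 1) ^ 2 ≤ (2 ^ c) ^ 2 := Nat.pow_le_pow_left hc 2
    _ = 2 ^ (2 * c) := by rw [← pow_mul, mul_comm]
  have hAB : (a + 1) * (c + 1) ^ 2 ≤ 2 ^ a * 2 ^ (2 * c) := Nat.mul_le_mul hA hB
  have hE : 2 ^ (a + 2 * c + 2) = 2 ^ a * 2 ^ (2 * c) * 4 := by
    rw [pow_add, pow_add]; norm_num
  have key : a + (a + 2 * c + 2) * c < (a + 1) * (c + 1) ^ 2 * 4 := by
    nlinarith [Nat.zero_le (a * c), Nat.zero_le (a * (c * c)), Nat.zero_le (c * c)]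
  calc a + (a + 2 * c + 2) * c < (a + 1) * (c + 1) ^ 2 * 4 := key
  _ ≤ 2 ^ a * 2 ^ (2 * c) * 4 := by
      exact Nat.mul_le_mul_right 4 hAB
  _ = 2 ^ (a + 2 * c + 2) := hE.symm

lemma exp_beats_poly (a k : ℕ) : ∃ m, 0 < m ∧ a * (m + 1) ^ k < 2 ^ m := by
  obtain ⟨j, hj0, hlt⟩ := linear_lt_two_pow (a + 1) k
  have h2j : 2 ≤ 2 ^ j := by
    calc 2 = 2 ^ 1 := rfl
    _ ≤ 2 ^ j := Nat.pow_le_pow_right (by norm_num) hj0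
  refine ⟨2 ^ j - 1, by omega, ?_⟩
  have hm1 : 2 ^ j - 1 + 1 = 2 ^ j := by omega
  rw [hm1, ← pow_mul]
  have h1 : a * 2 ^ (j * k) < 2 ^ a * 2 ^ (j * k) :=
    Nat.mul_lt_mul_of_lt_of_le (Nat.lt_two_pow_self (n := a)) le_rfl (by positivity)
  have h2 : 2 ^ a * 2 ^ (j * k) = 2 ^ (a + j * k) := (pow_add 2 a (j * k)).symm
  have h3 : 2 ^ (a + j * k) ≤ 2 ^ (2 ^ j - 1) :=
    Nat.pow_le_pow_right (by norm_num) (by omega)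
  omega




section Easy

variable {α : Type} (L : Language α)

lemma mnrel_refl (x : List α) : MNrel L x x := fun _ => Iff.rfl

lemma mnrel_symm {x y : List α} (h : MNrel L x y) : MNrel L y x := fun z => (h z).symm

lemma mnrel_append {x y : List α} (h : MNrel L x y) (z : List α) :
    MNrel L (x ++ z) (y ++ z) := by
  intro ζ
  simpa [List.append_assoc] using h (z ++ ζ)

lemma se_refl (x : List α) : SuffixExpansion (MNrel L) x x :=
  ⟨rfl, fun _ _ => mnrel_refl L _⟩

variable {u₂ v₂ u v : List α}

section CritFixed

variable (hc : IsCriticalTuple (MNrel L) u₂ v₂ u v)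

/-- normalized blocks -/
private def Ublk (u v : List α) : List α := (List.replicate v.length u).flatten
private def Vblk (u v : List α) : List α := (List.replicate u.length v).flatten

lemma Ublk_length : (Ublk u v).length = u.length * v.length := by
  simp [Ublk, List.length_flatten, List.map_replicate, List.sum_replicate, Nat.mul_comm,
    smul_eq_mul]

lemma Vblk_length : (Vblk u v).length = u.length * v.length := by
  simp [Vblk, List.length_flatten, List.map_replicate, List.sum_replicate, smul_eq_mul]

lemma uvstar_nil : ([] : List α) ∈ UVStar u v := ⟨[], by simp, by simp⟩

lemma uvstar_cons {w b : List α} (hb : b = u ∨ b = v) (hw : w ∈ UVStar u v) :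
    b ++ w ∈ UVStar u v := by
  obtain ⟨l, hl, rfl⟩ := hw
  refine ⟨b :: l, ?_, by simp⟩
  intro p hp
  rcases List.mem_cons.mp hp with rfl | hp
  · exact hb
  · exact hl p hp

lemma uvstar_append {w w' : List α} (hw : w ∈ UVStar u v) (hw' : w' ∈ UVStar u v) :
    w ++ w' ∈ UVStar u v := by
  obtain ⟨l, hl, rfl⟩ := hw
  induction l with
  | nil => simpa using hw'
  | cons b l ih =>
    have hb := hl b (by simp)
    have ih' := ih (fun p hp => hl p (by simp [hp]))
    simpa [List.append_assoc] using uvstar_cons hb ih'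

lemma replicate_mem_uvstar (n : ℕ) (hb : ∀ p ∈ [u], p = u ∨ p = v) :
    (List.replicate n u).flatten ∈ UVStar u v :=
  ⟨List.replicate n u, fun p hp => Or.inl (List.eq_of_mem_replicate hp), rfl⟩

lemma Ublk_mem : Ublk u v ∈ UVStar u v :=
  ⟨List.replicate v.length u, fun p hp => Or.inl (List.eq_of_mem_replicate hp), rfl⟩

lemma Vblk_mem : Vblk u v ∈ UVStar u v :=
  ⟨List.replicate u.length v, fun p hp => Or.inr (List.eq_of_mem_replicate hp), rfl⟩

lemma uvstar_UV_subset {w : List α} (hw : w ∈ UVStar (Ublk u v) (Vblk u v)) :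
    w ∈ UVStar u v := by
  obtain ⟨l, hl, rfl⟩ := hw
  induction l with
  | nil => exact uvstar_nil
  | cons b l ih =>
    have hb := hl b (by simp)
    have ih' := ih (fun p hp => hl p (by simp [hp]))
    have hbm : b ∈ UVStar u v := by
      rcases hb with rfl | rfl
      · exact Ublk_mem
      · exact Vblk_mem
    simpa using uvstar_append hbm ih'

lemma u_suffix_Ublk (hu : 0 < v.length) : u <:+ Ublk u v := by
  obtain ⟨n, hn⟩ : ∃ n, v.length = n + 1 := ⟨v.length - 1, by omega⟩
  refine ⟨(List.replicate n u).flatten, ?_⟩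
  rw [Ublk, hn, List.replicate_succ', List.flatten_append]
  simp

lemma v_suffix_Vblk (hv : 0 < u.length) : v <:+ Vblk u v := by
  obtain ⟨n, hn⟩ : ∃ n, u.length = n + 1 := ⟨u.length - 1, by omega⟩
  refine ⟨(List.replicate n v).flatten, ?_⟩
  rw [Vblk, hn, List.replicate_succ', List.flatten_append]
  simp

end CritFixed

/-! ### Fooling words -/

variable (u v : List α)

/-- `Wword f m` = block `f (m-1)`, …, block `f 0` concatenated (block `true` = U). -/
def Wword (f : ℕ → Bool) : ℕ → List α
  | 0 => []
  | m + 1 => (if f m then Ublk u v else Vblk u v) ++ Wword f m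

lemma Wword_length (f : ℕ → Bool) (m : ℕ) :
    (Wword u v f m).length = m * (u.length * v.length) := by
  induction m with
  | zero => simp [Wword]
  | succ m ih =>
    by_cases h : f m <;>
      simp [Wword, h, ih, Ublk_length, Vblk_length, Nat.succ_mul, Nat.add_comm]

lemma Wword_mem_UV (f : ℕ → Bool) (m : ℕ) :
    Wword u v f m ∈ UVStar (Ublk u v) (Vblk u v) := by
  induction m with
  | zero => exact uvstar_nil
  | succ m ih =>
    by_cases h : f m <;> simp only [Wword, h, if_true, if_false] <;>
      exact uvstar_cons (by simp) ih

lemma Wword_mem (f : ℕ → Bool) (m : ℕ) : Wword u v f m ∈ UVStar u v :=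
  uvstar_UV_subset (Wword_mem_UV u v f m)

lemma Wword_congr {f f' : ℕ → Bool} {m : ℕ} (h : ∀ j < m, f j = f' j) :
    Wword u v f m = Wword u v f' m := by
  induction m with
  | zero => rfl
  | succ m ih =>
    rw [Wword, Wword, h m (by omega), ih (fun j hj => h j (by omega))]

lemma Wword_decomp (f : ℕ → Bool) {i m : ℕ} (him : i ≤ m) :
    ∃ Z : List α, Wword u v f m = Z ++ Wword u v f i ∧
      Z.length = (m - i) * (u.length * v.length) := by
  induction m with
  | zero =>
    refine ⟨[], ?_, ?_⟩ <;> simp_all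
  | succ m ih =>
    rcases Nat.lt_or_ge i (m + 1) with hlt | hge
    · obtain ⟨Z, hZ, hZl⟩ := ih (by omega)
      refine ⟨(if f m then Ublk u v else Vblk u v) ++ Z, by rw [Wword, hZ, List.append_assoc], ?_⟩
      have : (m + 1 - i) = (m - i) + 1 := by omega
      by_cases h : f m <;>
        simp [h, hZl, Ublk_length, Vblk_length, this, Nat.succ_mul, Nat.add_comm]
    · have : i = m + 1 := by omega
      subst this
      exact ⟨[], by simp, by simp⟩

section NotSE

variable {u₂ v₂ u v : List α}

lemma se_symm {x y : List α} (h : SuffixExpansion (MNrel L) x y) :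
    SuffixExpansion (MNrel L) y x := by
  obtain ⟨hl, hr⟩ := h
  exact ⟨hl.symm, fun i hi => mnrel_symm L (hr i (by omega))⟩

private lemma Wword_not_se_aux (hc : IsCriticalTuple (MNrel L) u₂ v₂ u v)
    {f f' : ℕ → Bool} {m i : ℕ} (hi : i < m) (hfi : f i = true) (hf'i : f' i = false)
    (hmin : ∀ j < i, f j = f' j) :
    ¬ SuffixExpansion (MNrel L) (Wword u v f m) (Wword u v f' m) := by
  obtain ⟨hc1, hc2, hc3, hc4, hc5⟩ := hc
  have hul : 0 < u.length := lt_of_lt_of_le hc1 hc3.length_le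
  have hvl : 0 < v.length := lt_of_lt_of_le (hc2 ▸ hc1) hc4.length_le
  set lam := u₂.length with hlam
  set ell := u.length * v.length with hell
  have hell0 : 0 < ell := Nat.mul_pos hul hvl
  have hu₂U : u₂ <:+ Ublk u v := hc3.trans (u_suffix_Ublk hvl)
  have hv₂V : v₂ <:+ Vblk u v := hc4.trans (v_suffix_Vblk hul)
  have hlamell : lam ≤ ell := by
    have := hu₂U.length_le
    rwa [Ublk_length] at this
  obtain ⟨P, hP⟩ := hu₂U
  obtain ⟨P', hP'⟩ := hv₂V
  have hPlen : P.length = ell - lam := by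
    have := congrArg List.length hP
    rw [List.length_append, Ublk_length] at this
    omega
  have hP'len : P'.length = ell - lam := by
    have := congrArg List.length hP'
    rw [List.length_append, Vblk_length] at this
    omega
  obtain ⟨Z, hZ, hZl⟩ := Wword_decomp u v f (show i + 1 ≤ m by omega)
  obtain ⟨Z', hZ', hZ'l⟩ := Wword_decomp u v f' (show i + 1 ≤ m by omega)
  have hWf : Wword u v f m = (Z ++ P) ++ (u₂ ++ Wword u v f i) := by
    rw [hZ]
    show Z ++ Wword u v f (i + 1) = _
    rw [Wword, hfi, if_pos rfl, ← hP]
    simp [List.append_assoc]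
  have hWf' : Wword u v f' m = (Z' ++ P') ++ (v₂ ++ Wword u v f' i) := by
    rw [hZ']
    show Z' ++ Wword u v f' (i + 1) = _
    rw [Wword, hf'i]
    simp only [Bool.false_eq_true, if_false]
    rw [← hP']
    simp [List.append_assoc]
  set D := (m - (i + 1)) * ell + (ell - lam) with hD
  have hZPlen : (Z ++ P).length = D := by
    rw [List.length_append, hZl, hPlen]
  have hZ'P'len : (Z' ++ P').length = D := by
    rw [List.length_append, hZ'l, hP'len]
  have hdropf : (Wword u v f m).drop D = u₂ ++ Wword u v f i := by
    rw [hWf, ← hZPlen, List.drop_left]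
  have hdropf' : (Wword u v f' m).drop D = v₂ ++ Wword u v f i := by
    rw [hWf', ← hZ'P'len, List.drop_left, Wword_congr u v (fun j hj => (hmin j hj).symm)]
  rintro ⟨hlen, hall⟩
  have hDlt : D < (Wword u v f m).length := by
    rw [Wword_length, ← hell]
    have h1 : (m - (i + 1)) * ell + ell = (m - i) * ell := by
      have h : m - (i + 1) + 1 = m - i := by omega
      rw [← h, Nat.succ_mul]
    have h2 : (m - i) * ell ≤ m * ell := Nat.mul_le_mul_right ell (by omega)
    have h3 : 1 ≤ lam := hc1
    omega
  have hmn := hall D hDlt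
  rw [hdropf, hdropf'] at hmn
  exact hc5 (Wword u v f i) (Wword_mem u v f i) hmn

lemma Wword_not_se (hc : IsCriticalTuple (MNrel L) u₂ v₂ u v)
    {f f' : ℕ → Bool} {m i : ℕ} (hi : i < m) (hne : f i ≠ f' i)
    (hmin : ∀ j < i, f j = f' j) :
    ¬ SuffixExpansion (MNrel L) (Wword u v f m) (Wword u v f' m) := by
  cases hfi : f i with
  | true =>
    have hf'i : f' i = false := by
      cases hgi : f' i
      · rfl
      · exact absurd (hfi.trans hgi.symm) hne
    exact Wword_not_se_aux L hc hi hfi hf'i hmin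
  | false =>
    have hf'i : f' i = true := by
      cases hgi : f' i
      · exact absurd (hfi.trans hgi.symm) hne
      · rfl
    intro hse
    exact Wword_not_se_aux L hc hi hf'i hfi (fun j hj => (hmin j hj).symm) (se_symm L hse)

end NotSE


lemma easy_direction [Fintype α] {u₂ v₂ u v : List α}
    (hpoly : GrowsPolynomially (classCount (SuffixExpansion (MNrel L))))
    (hc : IsCriticalTuple (MNrel L) u₂ v₂ u v) : False := by
  classical
  obtain ⟨k, C, hC⟩ := hpoly
  have hul : 0 < u.length := lt_of_lt_of_le hc.1 hc.2.2.1.length_le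
  have hvl : 0 < v.length := lt_of_lt_of_le (hc.2.1 ▸ hc.1) hc.2.2.2.1.length_le
  set ell := u.length * v.length with hell
  have hell0 : 0 < ell := Nat.mul_pos hul hvl
  obtain ⟨m, hm, hlt⟩ := exp_beats_poly (C * (ell + 1) ^ k) k
  set fe : (Fin m → Bool) → (ℕ → Bool) := fun g j => if h : j < m then g ⟨j, h⟩ else false
    with hfe
  set WW : (Fin m → Bool) → List α := fun g => Wword u v (fe g) m with hWW
  set cls : (Fin m → Bool) → Set (List α) :=
    fun g => {y | SuffixExpansion (MNrel L) (WW g) y} with hcls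
  have hinj : Function.Injective cls := by
    intro g g' h
    by_contra hne
    have hex : ∃ j, fe g j ≠ fe g' j := by
      obtain ⟨j, hj⟩ : ∃ j, g j ≠ g' j := by
        by_contra h'
        push_neg at h'
        exact hne (funext h')
      exact ⟨j.val, by simpa [hfe, j.isLt] using hj⟩
    set i := Nat.find hex with hi
    have hind : fe g i ≠ fe g' i := Nat.find_spec hex
    have himin : ∀ j' < i, fe g j' = fe g' j' := fun j' hj' =>
      not_not.mp (Nat.find_min hex hj')
    have him : i < m := by
      by_contra hge
      push_neg at hge
      have h1 : fe g i = false := by simp [hfe, Nat.not_lt.mpr hge]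
      have h2 : fe g' i = false := by simp [hfe, Nat.not_lt.mpr hge]
      exact hind (h1.trans h2.symm)
    have hnse := Wword_not_se L hc him hind himin
    have hmem : WW g' ∈ cls g' := se_refl L (WW g')
    rw [← h] at hmem
    exact hnse hmem
  have hsub : cls '' Set.univ ⊆
      {C | ∃ x : List α, x.length ≤ m * ell ∧ C = {y | SuffixExpansion (MNrel L) x y}} := by
    rintro _ ⟨g, -, rfl⟩
    exact ⟨WW g, by rw [hWW, Wword_length, ← hell], rfl⟩
  have hfin : {C | ∃ x : List α, x.length ≤ m * ell ∧
      C = {y | SuffixExpansion (MNrel L) x y}}.Finite := by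
    have heq : {C | ∃ x : List α, x.length ≤ m * ell ∧
        C = {y | SuffixExpansion (MNrel L) x y}} =
        (fun x => {y | SuffixExpansion (MNrel L) x y}) '' {x : List α | x.length ≤ m * ell} := by
      ext C
      constructor
      · rintro ⟨x, hx, rfl⟩
        exact ⟨x, hx, rfl⟩
      · rintro ⟨x, hx, rfl⟩
        exact ⟨x, hx, rfl⟩
    rw [heq]
    exact (List.finite_length_le α (m * ell)).image _
  have h2m : 2 ^ m ≤ classCount (SuffixExpansion (MNrel L)) (m * ell) := by
    have hcard : (cls '' Set.univ).ncard = 2 ^ m := by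
      rw [Set.ncard_image_of_injective _ hinj, Set.ncard_univ]
      simp [Nat.card_eq_fintype_card]
    calc 2 ^ m = (cls '' Set.univ).ncard := hcard.symm
    _ ≤ _ := Set.ncard_le_ncard hsub hfin
  have hle := hC (m * ell)
  have hstep : (m * ell + 1) ^ k ≤ ((ell + 1) * (m + 1)) ^ k :=
    Nat.pow_le_pow_left (by nlinarith) k
  have hfinal : classCount (SuffixExpansion (MNrel L)) (m * ell) <
      2 ^ m := by
    calc classCount (SuffixExpansion (MNrel L)) (m * ell) ≤ C * (m * ell + 1) ^ k := hle
    _ ≤ C * (((ell + 1) * (m + 1)) ^ k) := Nat.mul_le_mul_left C hstep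
    _ = C * (ell + 1) ^ k * (m + 1) ^ k := by rw [mul_pow, ← mul_assoc]
    _ < 2 ^ m := hlt
  omega

end Easy



section Hard

variable {α : Type} [Fintype α] {σ : Type} [Fintype σ] [DecidableEq σ] (M : DFA α σ)

/-- The transformation of states induced by a word. -/
def phif (w : List α) : σ → σ := fun q => M.evalFrom q w

lemma phif_apply (w : List α) (q : σ) : phif M w q = M.evalFrom q w := rfl

lemma evalFrom_append (q : σ) (x y : List α) :
    M.evalFrom q (x ++ y) = M.evalFrom (M.evalFrom q x) y :=
  M.evalFrom_of_append q x y

lemma evalFrom_cons (q : σ) (a : α) (x : List α) :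
    M.evalFrom q (a :: x) = M.evalFrom (M.step q a) x := rfl

/-- Language accepted from a state. -/
def AccL (q : σ) : Set (List α) := {z | M.evalFrom q z ∈ M.accept}

/-- The Myhill–Nerode data of a word. -/
def nuf (w : List α) : Set (List α) := AccL M (M.eval w)

lemma accL_evalFrom (p : σ) (z : List α) :
    AccL M (M.evalFrom p z) = {ζ | z ++ ζ ∈ AccL M p} := by
  ext ζ
  simp [AccL, evalFrom_append]

lemma accL_transfer {p p' : σ} (h : AccL M p = AccL M p') (z : List α) :
    AccL M (M.evalFrom p z) = AccL M (M.evalFrom p' z) := by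
  rw [accL_evalFrom, accL_evalFrom, h]

variable {L : Language α}

lemma nuf_eq_quot (hL : M.accepts = L) (w : List α) : nuf M w = {z | w ++ z ∈ L} := by
  ext z
  rw [← hL]
  simp [nuf, AccL, DFA.mem_accepts, DFA.eval, evalFrom_append]

lemma mnrel_iff_nuf (hL : M.accepts = L) (x y : List α) : MNrel L x y ↔ nuf M x = nuf M y := by
  rw [nuf_eq_quot M hL, nuf_eq_quot M hL]
  constructor
  · intro h
    ext z
    exact h z
  · intro h z
    exact Set.ext_iff.mp h z

/-! ### Idempotent-type power of a transformation -/

lemma exists_npow (g : σ → σ) : ∃ N, 0 < N ∧ ∀ m, 0 < m → g^[N * m] = g^[N] := by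
  classical
  have hcard : Fintype.card (σ → σ) < Fintype.card (Fin (Fintype.card (σ → σ) + 1)) := by
    simp
  obtain ⟨x, y, hxy, hfxy⟩ :=
    Fintype.exists_ne_map_eq_of_card_lt (fun i : Fin (Fintype.card (σ → σ) + 1) =>
      g^[(i : ℕ) + 1]) hcard
  -- wlog x < y
  rcases Ne.lt_or_gt hxy with hlt | hlt
  all_goals {
    first
    | (have ha : ∃ a p, 0 < a ∧ 0 < p ∧ g^[a + p] = g^[a] :=
        ⟨(x : ℕ) + 1, (y : ℕ) - (x : ℕ), by omega, by omega, by
          have : (x : ℕ) + 1 + ((y : ℕ) - (x : ℕ)) = (y : ℕ) + 1 := by omega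
          rw [this, hfxy]⟩)
    | (have ha : ∃ a p, 0 < a ∧ 0 < p ∧ g^[a + p] = g^[a] :=
        ⟨(y : ℕ) + 1, (x : ℕ) - (y : ℕ), by omega, by omega, by
          have : (y : ℕ) + 1 + ((x : ℕ) - (y : ℕ)) = (x : ℕ) + 1 := by omega
          rw [this, ← hfxy]⟩)
    obtain ⟨a, p, ha0, hp0, hap⟩ := ha
    have hstep : ∀ x ≥ a, g^[x + p] = g^[x] := by
      intro x hx
      have h1 : x + p = (x - a) + (a + p) := by omega
      have h2 : x = (x - a) + a := by omega
      rw [h1, Function.iterate_add, hap, ← Function.iterate_add, ← h2]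
    have hmulti : ∀ d x, x ≥ a → g^[x + d * p] = g^[x] := by
      intro d
      induction d with
      | zero => intro x _; simp
      | succ d ih =>
        intro x hx
        have : x + (d + 1) * p = (x + d * p) + p := by ring
        rw [this, hstep _ (by nlinarith), ih x hx]
    refine ⟨a * p, by positivity, ?_⟩
    intro m hm
    obtain ⟨m', rfl⟩ : ∃ m', m = m' + 1 := ⟨m - 1, by omega⟩
    have heq : a * p * (m' + 1) = a * p + (a * m') * p := by ring
    rw [heq, hmulti _ _ (by nlinarith)]
  }

/-- Chosen "idempotent power" for each transformation. -/
noncomputable def Npow (g : σ → σ) : ℕ := (exists_npow g).choose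

lemma Npow_pos (g : σ → σ) : 0 < Npow g := (exists_npow g).choose_spec.1

lemma Npow_spec (g : σ → σ) : ∀ m, 0 < m → g^[Npow g * m] = g^[Npow g] :=
  (exists_npow g).choose_spec.2

/-! ### Flatten of uv-blocks -/

lemma evalFrom_flatten_blocks {Y Y' : List α} (hphi : phif M Y = phif M Y')
    (l : List (List α)) (hl : ∀ p ∈ l, p = Y ∨ p = Y') (q : σ) :
    M.evalFrom q l.flatten = (phif M Y)^[l.length] q := by
  induction l generalizing q with
  | nil => simp
  | cons b l ih =>
    have hb : M.evalFrom q b = phif M Y q := by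
      rcases hl b (by simp) with rfl | rfl
      · rfl
      · rw [← phif_apply, hphi]
    rw [List.flatten_cons, evalFrom_append, hb, ih (fun p hp => hl p (by simp [hp])),
      List.length_cons, Function.iterate_succ_apply]

lemma mnrel_append' {x y : List α} (h : MNrel L x y) (z : List α) :
    MNrel L (x ++ z) (y ++ z) := by
  intro ζ
  simpa [List.append_assoc] using h (z ++ ζ)

/-! ### The pumping lemma from absence of critical tuples -/

lemma pump (hL : M.accepts = L)
    (hnc : ¬ ∃ u₂ v₂ u v, IsCriticalTuple (MNrel L) u₂ v₂ u v)
    (Y Y' : List α) (hlen : Y.length = Y'.length) (hphi : phif M Y = phif M Y')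
    (i : ℕ) (hi : i < Y.length) :
    AccL M ((phif M Y)^[Npow (phif M Y)] (M.eval (Y.drop i))) =
      AccL M ((phif M Y)^[Npow (phif M Y)] (M.eval (Y'.drop i))) := by
  classical
  set g := phif M Y with hg
  set N := Npow g with hN
  set s := Y.drop i with hs
  set s' := Y'.drop i with hs'
  have hncrit : ¬ IsCriticalTuple (MNrel L) s s' Y Y' := fun hcrit =>
    hnc ⟨s, s', Y, Y', hcrit⟩
  unfold IsCriticalTuple at hncrit
  push_neg at hncrit
  have h1 : 1 ≤ s.length := by
    rw [hs, List.length_drop]; omega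
  have h2 : s.length = s'.length := by
    rw [hs, hs', List.length_drop, List.length_drop, hlen]
  obtain ⟨w, hwuv, hmn⟩ := hncrit h1 h2 (List.drop_suffix i Y) (List.drop_suffix i Y')
  obtain ⟨lst, hblk, rfl⟩ := hwuv
  set k := lst.length with hk
  have hN1 : 0 < N := Npow_pos g
  set j := N * (k + 1) - k with hj
  set lst₂ := lst ++ List.replicate j Y with hlst₂
  have hblk₂ : ∀ p ∈ lst₂, p = Y ∨ p = Y' := by
    intro p hp
    rcases List.mem_append.mp hp with hp | hp
    · exact hblk p hp
    · exact Or.inl (List.eq_of_mem_replicate hp)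
  have hlen₂ : lst₂.length = N * (k + 1) := by
    rw [hlst₂, List.length_append, List.length_replicate]
    have : k ≤ N * (k + 1) := by nlinarith
    omega
  have hmn₂ : MNrel L (s ++ lst₂.flatten) (s' ++ lst₂.flatten) := by
    rw [hlst₂, List.flatten_append, ← List.append_assoc, ← List.append_assoc]
    exact mnrel_append' hmn _
  have hnu := (mnrel_iff_nuf M hL _ _).mp hmn₂
  have heval : ∀ t : List α, M.eval (t ++ lst₂.flatten) = g^[N] (M.eval t) := by
    intro t
    rw [DFA.eval, evalFrom_append, ← DFA.eval,
      evalFrom_flatten_blocks M hphi lst₂ hblk₂, hlen₂, Npow_spec g (k+1) (by omega)]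
  rw [nuf, nuf, heval s, heval s'] at hnu
  exact hnu

/-! ### The suffix-class sequence -/

/-- List of Myhill–Nerode data of all suffixes (longest first). -/
def tauSeq (w : List α) : List (Set (List α)) :=
  (List.range w.length).map (fun i => nuf M (w.drop i))

lemma tauSeq_length (w : List α) : (tauSeq M w).length = w.length := by
  simp [tauSeq]

lemma tauSeq_append (x r : List α) :
    tauSeq M (x ++ r) =
      ((List.range x.length).map fun i => nuf M (x.drop i ++ r)) ++ tauSeq M r := by
  unfold tauSeq
  rw [List.length_append, List.range_add, List.map_append, List.map_map]
  congr 1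
  · refine List.map_congr_left ?_
    intro i hi
    rw [List.mem_range] at hi
    rw [List.drop_append_of_le_length (by omega)]
  · refine List.map_congr_left ?_
    intro i _
    show nuf M ((x ++ r).drop (x.length + i)) = nuf M (r.drop i)
    rw [List.drop_append]
    simp [List.drop_of_length_le (show x.length ≤ x.length + i by omega)]

lemma tauSeq_singleton_append (a : α) (r : List α) :
    tauSeq M (a :: r) = nuf M (a :: r) :: tauSeq M r := by
  have h : a :: r = [a] ++ r := rfl
  rw [h, tauSeq_append]
  rw [show ([a] : List α).length = 1 from rfl, show List.range 1 = [0] from rfl]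
  simp

lemma se_iff_tauSeq (hL : M.accepts = L) (x y : List α) :
    SuffixExpansion (MNrel L) x y ↔ tauSeq M x = tauSeq M y := by
  constructor
  · rintro ⟨hlen, hall⟩
    apply List.ext_getElem (by simp [tauSeq_length, hlen])
    intro i h1 h2
    rw [tauSeq_length] at h1 h2
    simp only [tauSeq, List.getElem_map, List.getElem_range]
    exact (mnrel_iff_nuf M hL _ _).mp (hall i h1)
  · intro h
    have hlen : x.length = y.length := by
      have := congrArg List.length h
      rwa [tauSeq_length, tauSeq_length] at this
    refine ⟨hlen, fun i hi => ?_⟩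
    rw [mnrel_iff_nuf M hL]
    have h1 : i < (tauSeq M x).length := by rwa [tauSeq_length]
    have := List.getElem_of_eq h h1
    simpa only [tauSeq, List.getElem_map, List.getElem_range] using this

/-! ### Decompositions -/

/-- A structured decomposition of a word, processed from the right:
`w = Y ++ a :: v` where reading `Y` in front of `a :: v` does not change any
state transformation. -/
inductive Decomp : List α → List (ℕ × (σ → σ) × α) → Prop
  | nil : Decomp [] []
  | cons (Y : List α) (a : α) (v : List α) (d : List (ℕ × (σ → σ) × α)) :
      Decomp v d →
      (∀ q, M.evalFrom q (Y ++ a :: v) = M.evalFrom q (a :: v)) →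
      Decomp (Y ++ a :: v) ((Y.length, phif M Y, a) :: d)

lemma decomp_nil_inv {w : List α} (h : Decomp M w []) : w = [] := by
  cases h; rfl

lemma decomp_cons_inv {w : List α} {c : ℕ × (σ → σ) × α} {d : List (ℕ × (σ → σ) × α)}
    (h : Decomp M w (c :: d)) :
    ∃ Y a v, w = Y ++ a :: v ∧ c = (Y.length, phif M Y, a) ∧ Decomp M v d ∧
      (∀ q, M.evalFrom q (Y ++ a :: v) = M.evalFrom q (a :: v)) := by
  cases h with
  | cons Y a v d hv hcond => exact ⟨Y, a, v, rfl, rfl, hv, hcond⟩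

/-- Key determinedness: two words with a common decomposition datum have the same
suffix-class sequence. -/
lemma decomp_det (hL : M.accepts = L)
    (hnc : ¬ ∃ u₂ v₂ u v, IsCriticalTuple (MNrel L) u₂ v₂ u v) :
    ∀ (d : List (ℕ × (σ → σ) × α)) (w w' : List α),
      Decomp M w d → Decomp M w' d →
      (∀ q, AccL M (M.evalFrom q w) = AccL M (M.evalFrom q w')) ∧
        tauSeq M w = tauSeq M w' := by
  intro d
  induction d with
  | nil =>
    intro w w' h h'
    rw [decomp_nil_inv M h, decomp_nil_inv M h']
    exact ⟨fun q => rfl, rfl⟩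
  | cons c d ih =>
    intro w w' h h'
    obtain ⟨Y, a, v, rfl, hc, hv, hcond⟩ := decomp_cons_inv M h
    obtain ⟨Y', a', v', rfl, hc', hv', hcond'⟩ := decomp_cons_inv M h'
    rw [hc] at hc'
    have hlY : Y.length = Y'.length := by
      have := congrArg (fun t => t.1) hc'; simpa using this
    have hgY : phif M Y = phif M Y' := by
      have := congrArg (fun t => t.2.1) hc'; simpa using this
    have haa : a = a' := by
      have := congrArg (fun t => t.2.2) hc'; simpa using this
    subst haa
    obtain ⟨ihst, ihtau⟩ := ih v v' hv hv'
    -- state-wise transfer for `a :: v` vs `a :: v'`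
    have hav : ∀ p : σ, AccL M (M.evalFrom p (a :: v)) = AccL M (M.evalFrom p (a :: v')) := by
      intro p
      rw [evalFrom_cons, evalFrom_cons]
      exact ihst (M.step p a)
    -- iterated absorption on the primed side
    have hstep' : ∀ q, M.evalFrom (phif M Y' q) (a :: v') = M.evalFrom q (a :: v') := by
      intro q
      have := hcond' q
      rwa [evalFrom_append] at this
    have hiter' : ∀ (j : ℕ) (q), M.evalFrom ((phif M Y')^[j] q) (a :: v') =
        M.evalFrom q (a :: v') := by
      intro j
      induction j with
      | zero => intro q; rfl
      | succ j ihj =>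
        intro q
        rw [Function.iterate_succ_apply, ihj (phif M Y' q), hstep' q]
    constructor
    · intro q
      calc AccL M (M.evalFrom q (Y ++ a :: v)) = AccL M (M.evalFrom q (a :: v)) := by
            rw [hcond q]
      _ = AccL M (M.evalFrom q (a :: v')) := hav q
      _ = AccL M (M.evalFrom q (Y' ++ a :: v')) := by rw [hcond' q]
    · rw [tauSeq_append, tauSeq_append, tauSeq_singleton_append, tauSeq_singleton_append]
      have he1 : nuf M (a :: v) = nuf M (a :: v') := by
        unfold nuf DFA.eval
        exact hav M.start
      rw [he1, ihtau, hlY]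
      congr 1
      refine List.map_congr_left ?_
      intro i hi
      rw [List.mem_range, ← hlY] at hi
      set g := phif M Y with hg
      set N := Npow g with hN
      have hsY : nuf M (Y.drop i ++ (a :: v)) =
          AccL M (M.evalFrom (M.eval (Y.drop i)) (a :: v)) := by
        unfold nuf DFA.eval
        rw [evalFrom_append]
      have hsY' : nuf M (Y'.drop i ++ (a :: v')) =
          AccL M (M.evalFrom (M.eval (Y'.drop i)) (a :: v')) := by
        unfold nuf DFA.eval
        rw [evalFrom_append]
      rw [hsY, hsY']
      calc AccL M (M.evalFrom (M.eval (Y.drop i)) (a :: v))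
          = AccL M (M.evalFrom (M.eval (Y.drop i)) (a :: v')) := hav _
      _ = AccL M (M.evalFrom ((phif M Y')^[N] (M.eval (Y.drop i))) (a :: v')) := by
            rw [hiter' N _]
      _ = AccL M (M.evalFrom ((phif M Y')^[N] (M.eval (Y'.drop i))) (a :: v')) := by
            have hp := pump M hL hnc Y Y' hlY hgY i hi
            rw [← hg, ← hN] at hp
            rw [← hgY]
            exact accL_transfer M hp (a :: v')
      _ = AccL M (M.evalFrom (M.eval (Y'.drop i)) (a :: v')) := by
            rw [hiter' N _]

/-! ### Existence of short decompositions (greedy, by pigeonhole) -/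

lemma decomp_exists_aux :
    ∀ (n : ℕ) (F : Finset (σ → σ)) (x v : List α) (d₀ : List (ℕ × (σ → σ) × α)),
      Fintype.card (σ → σ) - F.card ≤ n →
      Decomp M v d₀ →
      (∀ x₁ y : List α, x = x₁ ++ y → y ≠ [] → phif M (y ++ v) ∉ F) →
      ∃ d₁, Decomp M (x ++ v) (d₁ ++ d₀) ∧ d₁.length ≤ n ∧ ∀ c ∈ d₁, c.1 ≤ x.length := by
  classical
  intro n
  induction n with
  | zero =>
    intro F x v d₀ hn hdv hinv
    rcases List.eq_nil_or_concat x with rfl | ⟨x', a, rfl⟩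
    · exact ⟨[], by simpa using hdv, by simp, by simp⟩
    · exfalso
      have hg : phif M ((a :: v : List α)) ∉ F := by
        have := hinv x' [a] (by simp [List.concat_eq_append]) (by simp)
        simpa using this
      have hne : F ≠ Finset.univ := by
        intro hFu
        exact hg (hFu ▸ Finset.mem_univ _)
      have hcard : F.card < Fintype.card (σ → σ) := by
        have := Finset.card_lt_card (Finset.ssubset_univ_iff.mpr hne)
        simpa [Finset.card_univ] using this
      omega
  | succ n ih =>
    intro F x v d₀ hn hdv hinv
    rcases List.eq_nil_or_concat x with rfl | ⟨x', a, rfl⟩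
    · exact ⟨[], by simpa using hdv, by simp, by simp⟩
    · have hxeq : x'.concat a = x' ++ [a] := List.concat_eq_append
      set gs := phif M (a :: v) with hgs
      have hgF : gs ∉ F := by
        have := hinv x' [a] (by simp [hxeq]) (by simp)
        simpa using this
      have hcard : F.card < Fintype.card (σ → σ) := by
        have hne : F ≠ Finset.univ := fun hFu => hgF (hFu ▸ Finset.mem_univ _)
        have := Finset.card_lt_card (Finset.ssubset_univ_iff.mpr hne)
        simpa [Finset.card_univ] using this
      have hPex : ∃ p, p ≤ x'.length ∧ phif M (x'.drop p ++ (a :: v)) = gs :=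
        ⟨x'.length, le_rfl, by simp [hgs]⟩
      set ps := Nat.find hPex with hps
      obtain ⟨hps_le, hps_eq⟩ := Nat.find_spec hPex
      set Y := x'.drop ps with hY
      have hcond : ∀ q, M.evalFrom q (Y ++ a :: v) = M.evalFrom q (a :: v) := by
        intro q
        have h1 := congrFun hps_eq q
        exact h1
      have hdec1 : Decomp M (Y ++ a :: v) ((Y.length, phif M Y, a) :: d₀) :=
        Decomp.cons Y a v d₀ hdv hcond
      -- recursive call on the prefix
      have htakelen : (x'.take ps).length = ps := by
        rw [List.length_take]; omega
      have hinv' : ∀ x₁ y : List α, x'.take ps = x₁ ++ y → y ≠ [] →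
          phif M (y ++ (Y ++ a :: v)) ∉ insert gs F := by
        intro x₁ y hxy hyne
        have hx'split : x' = x₁ ++ (y ++ Y) := by
          conv_lhs => rw [← List.take_append_drop ps x', hxy, ← hY]
          rw [List.append_assoc]
        have hlensum : x₁.length + y.length = ps := by
          have := congrArg List.length hxy
          rw [htakelen, List.length_append] at this
          omega
        have hylen : 0 < y.length := List.length_pos_iff.mpr hyne
        have hdrop : x'.drop x₁.length = y ++ Y := by
          rw [hx'split, List.drop_left]
        have hassoc : y ++ (Y ++ a :: v) = x'.drop x₁.length ++ (a :: v) := by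
          rw [hdrop, List.append_assoc]
        rw [hassoc, Finset.mem_insert]
        push_neg
        constructor
        · intro heq
          have hmin := Nat.find_min hPex (show x₁.length < ps by omega)
          exact hmin ⟨by omega, heq⟩
        · have h2 : x'.concat a = x'.take x₁.length ++ (x'.drop x₁.length ++ [a]) := by
            rw [← List.append_assoc, List.take_append_drop, hxeq]
          have h3 := hinv (x'.take x₁.length) (x'.drop x₁.length ++ [a]) h2 (by simp)
          have h4 : x'.drop x₁.length ++ [a] ++ v = x'.drop x₁.length ++ (a :: v) := by
            rw [List.append_assoc]; rfl
          rwa [h4] at h3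
      have hn' : Fintype.card (σ → σ) - (insert gs F).card ≤ n := by
        rw [Finset.card_insert_of_notMem hgF]
        omega
      obtain ⟨d₁', hdec', hlen', hbound'⟩ :=
        ih (insert gs F) (x'.take ps) (Y ++ a :: v) ((Y.length, phif M Y, a) :: d₀)
          hn' hdec1 hinv'
      refine ⟨d₁' ++ [(Y.length, phif M Y, a)], ?_, ?_, ?_⟩
      · have hw : x'.take ps ++ (Y ++ a :: v) = x'.concat a ++ v := by
          rw [← List.append_assoc, hY, List.take_append_drop, hxeq, List.append_assoc]
          rfl
        have hd : d₁' ++ [(Y.length, phif M Y, a)] ++ d₀ =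
            d₁' ++ ((Y.length, phif M Y, a) :: d₀) := by
          rw [List.append_assoc]; rfl
        rw [hd, ← hw]
        exact hdec'
      · rw [List.length_append]
        simp only [List.length_singleton]
        omega
      · intro c hc
        rcases List.mem_append.mp hc with hc | hc
        · have := hbound' c hc
          have h5 : (x'.take ps).length ≤ (x'.concat a).length := by
            rw [htakelen, hxeq, List.length_append]
            simp; omega
          omega
        · have hc' : c = (Y.length, phif M Y, a) := by simpa using hc
          subst hc'
          have : Y.length ≤ x'.length := by
            rw [hY, List.length_drop]; omega
          have h6 : (x'.concat a).length = x'.length + 1 := by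
            rw [hxeq, List.length_append]; simp
          simp only []
          omega

lemma decomp_exists (w : List α) :
    ∃ d, Decomp M w d ∧ d.length ≤ Fintype.card (σ → σ) ∧ ∀ c ∈ d, c.1 ≤ w.length := by
  classical
  obtain ⟨d₁, hdec, hlen, hbound⟩ :=
    decomp_exists_aux M (Fintype.card (σ → σ)) ∅ w [] [] (by simp) Decomp.nil
      (by intro x₁ y hxy hyne; simp)
  refine ⟨d₁, ?_, hlen, ?_⟩
  · simpa using hdec
  · intro c hc
    exact hbound c hc

/-! ### Counting decomposition data -/

/-- Encoding of decomposition data into a fixed finite type. -/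
noncomputable def encD (n : ℕ) (d : List (ℕ × (σ → σ) × α)) :
    Fin (Fintype.card (σ → σ) + 1) ×
      (Fin (Fintype.card (σ → σ)) → (Fin (n + 1) × (σ → σ) × Option α)) :=
  ⟨⟨min d.length (Fintype.card (σ → σ)), by omega⟩,
   fun i => if h : (i : ℕ) < d.length then
      ⟨⟨min (d.get ⟨i, h⟩).1 n, by omega⟩, (d.get ⟨i, h⟩).2.1, some (d.get ⟨i, h⟩).2.2⟩
    else ⟨⟨0, by omega⟩, id, none⟩⟩

lemma encD_inj (n : ℕ) {d d' : List (ℕ × (σ → σ) × α)}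
    (hd : d.length ≤ Fintype.card (σ → σ)) (hd' : d'.length ≤ Fintype.card (σ → σ))
    (hb : ∀ c ∈ d, c.1 ≤ n) (hb' : ∀ c ∈ d', c.1 ≤ n)
    (h : encD (α := α) (σ := σ) n d = encD n d') : d = d' := by
  have hfst := congrArg Prod.fst h
  have hsnd := congrArg Prod.snd h
  simp only [encD] at hfst hsnd
  have hlen : d.length = d'.length := by
    have := congrArg Fin.val hfst
    simp only [Fin.val_mk] at this
    omega
  apply List.ext_getElem hlen
  intro i h1 h2
  have hiκ : i < Fintype.card (σ → σ) := by omega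
  have := congrFun hsnd ⟨i, hiκ⟩
  rw [dif_pos (show ((⟨i, hiκ⟩ : Fin _) : ℕ) < d.length from h1),
    dif_pos (show ((⟨i, hiκ⟩ : Fin _) : ℕ) < d'.length from h2)] at this
  have e1 := congrArg (fun p => ((p.1 : Fin (n + 1)) : ℕ)) this
  have e2 := congrArg (fun p => p.2.1) this
  have e3 := congrArg (fun p => p.2.2) this
  simp only [Fin.val_mk] at e1
  have hc1 : (d.get ⟨i, h1⟩).1 ≤ n := hb _ (d.get_mem _)
  have hc1' : (d'.get ⟨i, h2⟩).1 ≤ n := hb' _ (d'.get_mem _)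
  have e1' : (d.get ⟨i, h1⟩).1 = (d'.get ⟨i, h2⟩).1 := by omega
  have e3' : (d.get ⟨i, h1⟩).2.2 = (d'.get ⟨i, h2⟩).2.2 := by
    simpa using e3
  show d.get ⟨i, h1⟩ = d'.get ⟨i, h2⟩
  have : (d.get ⟨i, h1⟩).2 = (d'.get ⟨i, h2⟩).2 := Prod.ext e2 e3'
  exact Prod.ext e1' this

/-! ### The polynomial bound -/

set_option synthInstance.maxHeartbeats 1000000 in
set_option maxHeartbeats 1000000 in
lemma hard_direction (hL : M.accepts = L)
    (hnc : ¬ ∃ u₂ v₂ u v, IsCriticalTuple (MNrel L) u₂ v₂ u v) :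
    GrowsPolynomially (classCount (SuffixExpansion (MNrel L))) := by
  classical
  set κ := Fintype.card (σ → σ) with hκ
  set CA := Fintype.card α with hCA
  refine ⟨κ, (κ + 1) * (κ * (CA + 1)) ^ κ, ?_⟩
  intro n
  have hWfin : {x : List α | x.length ≤ n}.Finite := List.finite_length_le α n
  have hTfin : (tauSeq M '' {x : List α | x.length ≤ n}).Finite := hWfin.image _
  have hCls : {C : Set (List α) | ∃ x : List α, x.length ≤ n ∧
      C = {y | SuffixExpansion (MNrel L) x y}} =
      (fun t => {y | tauSeq M y = t}) '' (tauSeq M '' {x : List α | x.length ≤ n}) := by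
    ext C
    constructor
    · rintro ⟨x, hx, rfl⟩
      rw [Set.image_image]
      refine ⟨x, hx, ?_⟩
      ext y
      simp only [Set.mem_setOf_eq]
      rw [se_iff_tauSeq M hL x y]
      exact ⟨Eq.symm, Eq.symm⟩
    · rw [Set.image_image]
      rintro ⟨x, hx, rfl⟩
      refine ⟨x, hx, ?_⟩
      ext y
      simp only [Set.mem_setOf_eq]
      rw [se_iff_tauSeq M hL x y]
      exact ⟨Eq.symm, Eq.symm⟩
  rw [classCount, hCls]
  have h1 : ((fun t => {y : List α | tauSeq M y = t}) ''
      (tauSeq M '' {x : List α | x.length ≤ n})).ncard ≤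
      (tauSeq M '' {x : List α | x.length ≤ n}).ncard :=
    Set.ncard_image_le hTfin
  -- now bound the number of tau-sequences by the number of data
  set DOK : List (ℕ × (σ → σ) × α) → List (Set (List α)) → Prop :=
    fun d t => d.length ≤ κ ∧ (∀ c ∈ d, c.1 ≤ n) ∧
      ∃ w, tauSeq M w = t ∧ Decomp M w d with hDOK
  have hInh : Inhabited (Fin (κ + 1) × (Fin κ → (Fin (n + 1) × (σ → σ) × Option α))) := by
    refine ⟨⟨⟨0, by omega⟩, fun _ => ⟨⟨0, by omega⟩, id, none⟩⟩⟩
  set f : List (Set (List α)) → (Fin (κ + 1) × (Fin κ → (Fin (n + 1) × (σ → σ) × Option α))) :=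
    fun t => if h : ∃ d, DOK d t then encD n h.choose else hInh.default with hf
  have hex : ∀ t ∈ tauSeq M '' {x : List α | x.length ≤ n}, ∃ d, DOK d t := by
    rintro t ⟨w, hw, rfl⟩
    obtain ⟨d, hdec, hlen, hbound⟩ := decomp_exists M w
    exact ⟨d, hlen, fun c hc => le_trans (hbound c hc) hw, w, rfl, hdec⟩
  have h2 : (tauSeq M '' {x : List α | x.length ≤ n}).ncard ≤
      (Set.univ : Set (Fin (κ + 1) × (Fin κ → (Fin (n + 1) × (σ → σ) × Option α)))).ncard := by
    refine Set.ncard_le_ncard_of_injOn f (fun a _ => Set.mem_univ _) ?_ (Set.finite_univ)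
    intro t ht t' ht' hff
    have hext := hex t ht
    have hext' := hex t' ht'
    rw [hf] at hff
    simp only [dif_pos hext, dif_pos hext'] at hff
    obtain ⟨hl1, hb1, w, hτw, hdw⟩ := hext.choose_spec
    obtain ⟨hl1', hb1', w', hτw', hdw'⟩ := hext'.choose_spec
    have hdd : hext.choose = hext'.choose := encD_inj n hl1 hl1' hb1 hb1' hff
    rw [hdd] at hdw
    have := (decomp_det M hL hnc hext'.choose w w' hdw hdw').2
    rw [← hτw, ← hτw', this]
  have h3 : (Set.univ : Set (Fin (κ + 1) × (Fin κ → (Fin (n + 1) × (σ → σ) × Option α)))).ncard =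
      (κ + 1) * ((n + 1) * (κ * (CA + 1))) ^ κ := by
    rw [Set.ncard_univ, Nat.card_eq_fintype_card]
    simp [Fintype.card_prod, Fintype.card_fun, Fintype.card_fin, Fintype.card_option,
      ← hκ, ← hCA]
  have h4 : (κ + 1) * ((n + 1) * (κ * (CA + 1))) ^ κ =
      (κ + 1) * (κ * (CA + 1)) ^ κ * (n + 1) ^ κ := by
    rw [mul_pow]
    ring
  omega

end Hard

end S6

/-- for a regular language `L`, the map `n ↦ |Σ^{≤n}/≈_L|` is
polynomially bounded iff the Myhill–Nerode right congruence `~_L` has no critical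
tuple. -/
theorem statement6 {α : Type} [Fintype α] (L : Language α) (hreg : L.IsRegular) :
    GrowsPolynomially (classCount (SuffixExpansion (MNrel L))) ↔
      ¬ ∃ u₂ v₂ u v, IsCriticalTuple (MNrel L) u₂ v₂ u v := by
  constructor
  · intro hpoly h
    obtain ⟨u₂, v₂, u, v, hc⟩ := h
    exact S6.easy_direction L hpoly hc
  · intro hnc
    obtain ⟨σ, hfin, M, hM⟩ := hreg
    haveI := hfin
    haveI := Classical.decEq σ
    exact S6.hard_direction M hM hnc
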